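/- Let p ∈ M be an unstable point for a sequence of measures {μₑ} with λ_k(μₑ) ≡ 1. Then, after passing to a subsequence, there exist a neighborhood Ω of p and radii rₑ → 0 such that ind(μₑ, Ω \ closure(B_{rₑ}(p))) = 0 for all ε. -/

import Mathlib

open MeasureTheory Filter Topology
open scoped Manifold

noncomputable section

/-- Euclidean model space. -/
abbrev Euc (m : ℕ) := EuclideanSpace ℝ (Fin m)

/-- The squared Riemannian norm `|dφ|²_g(x)` of the differential of `φ` at `x`,
computed from the (inverse) metric `gInv` acting on cotangent vectors via the
Euclidean identification of tangent spaces. -/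
def gradSqG {m : ℕ} {M : Type*} [TopologicalSpace M] [ChartedSpace (Euc m) M]
    (gInv : M → Euc m →L[ℝ] Euc m) (φ : M → ℝ) (x : M) : ℝ :=
  (mfderiv (𝓡 m) 𝓘(ℝ, ℝ) φ x : Euc m →L[ℝ] ℝ)
    (gInv x ((InnerProductSpace.toDual ℝ (Euc m)).symm
      (mfderiv (𝓡 m) 𝓘(ℝ, ℝ) φ x : Euc m →L[ℝ] ℝ)))

/-- `φ ∈ C^∞(M)`. -/
def SmoothFn (m : ℕ) {M : Type*} [TopologicalSpace M] [ChartedSpace (Euc m) M] (φ : M → ℝ) : Prop :=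
  ContMDiff (𝓡 m) 𝓘(ℝ, ℝ) (⊤ : ℕ∞) φ

/-- The quadratic form `Q_μ(φ) = ∫ |dφ|²_g dv_g − ∫ φ² dμ`. -/
def Qform {m : ℕ} {M : Type*} [TopologicalSpace M] [ChartedSpace (Euc m) M] [MeasurableSpace M]
    (vol μ : Measure M) (gInv : M → Euc m →L[ℝ] Euc m) (φ : M → ℝ) : ℝ :=
  (∫ x, gradSqG gInv φ x ∂vol) - ∫ x, (φ x) ^ 2 ∂μ

/-- `ind(μ, Ω) = 0`: the form `Q_μ` is nonnegative on `C₀^∞(Ω)`. -/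
def IndexZero {m : ℕ} {M : Type*} [TopologicalSpace M] [ChartedSpace (Euc m) M] [MeasurableSpace M]
    (vol μ : Measure M) (gInv : M → Euc m →L[ℝ] Euc m) (Ω : Set M) : Prop :=
  ∀ φ : M → ℝ, SmoothFn m φ → tsupport φ ⊆ Ω → 0 ≤ Qform vol μ gInv φ

/-- The variational eigenvalue
`λ_k(μ) = inf_{F_{k+1} ⊂ C^∞(M)} sup_{φ ∈ F_{k+1}} (∫|dφ|²_g dv_g)/(∫φ² dμ)`. -/
def lambdaK {m : ℕ} {M : Type*} [TopologicalSpace M] [ChartedSpace (Euc m) M] [MeasurableSpace M]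
    (vol : Measure M) (gInv : M → Euc m →L[ℝ] Euc m) (k : ℕ) (μ : Measure M) : ℝ :=
  sInf {r : ℝ | ∃ F : Submodule ℝ (M → ℝ), Module.finrank ℝ F = k + 1 ∧
    (∀ φ ∈ F, SmoothFn m φ) ∧
    r = sSup {s : ℝ | ∃ φ ∈ F,
      s = (∫ x, gradSqG gInv φ x ∂vol) / ∫ x, (φ x) ^ 2 ∂μ}}

/-- Weak-* convergence of measures (testing against continuous functions). -/
def WeakStarMeas {M : Type*} [TopologicalSpace M] [MeasurableSpace M]
    (μs : ℕ → Measure M) (μ : Measure M) : Prop :=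
  ∀ f : M → ℝ, Continuous f →
    Tendsto (fun n => ∫ x, f x ∂(μs n)) atTop (𝓝 (∫ x, f x ∂μ))

/-- `p` is a stable point for the sequence `{μₑ}`: some neighborhood `Ω` of `p` has
`ind(μₑ, Ω) = 0` along a subsequence. -/
def StablePt {m : ℕ} {M : Type*} [TopologicalSpace M] [ChartedSpace (Euc m) M] [MeasurableSpace M]
    (vol : Measure M) (gInv : M → Euc m →L[ℝ] Euc m) (μs : ℕ → Measure M) (p : M) : Prop :=
  ∃ Ω : Set M, IsOpen Ω ∧ p ∈ Ω ∧
    ∃ ψ : ℕ → ℕ, StrictMono ψ ∧ ∀ j, IndexZero vol (μs (ψ j)) gInv Ω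

end

private lemma gradSqG_eq_zero_of_not_mem {m : ℕ} {M : Type*} [TopologicalSpace M]
    [ChartedSpace (Euc m) M] (gInv : M → Euc m →L[ℝ] Euc m) (φ : M → ℝ) {x : M}
    (hx : x ∉ tsupport φ) : gradSqG gInv φ x = 0 := by
  have h0 : mfderiv (𝓡 m) 𝓘(ℝ, ℝ) φ x = 0 := by
    have h := notMem_tsupport_iff_eventuallyEq.mp hx
    rw [h.mfderiv_eq]
    exact mfderiv_const
  simp [gradSqG, h0]
  rfl

private def combo {k : ℕ} {M : Type*} (φ : Fin (k+1) → M → ℝ) :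
    (Fin (k+1) → ℝ) →ₗ[ℝ] (M → ℝ) where
  toFun c := fun x => ∑ j, c j * φ j x
  map_add' a b := by funext x; simp [add_mul, Finset.sum_add_distrib]
  map_smul' r a := by funext x; simp [Finset.mul_sum, mul_assoc]

private lemma combo_apply {k : ℕ} {M : Type*} (φ : Fin (k+1) → M → ℝ) (c : Fin (k+1) → ℝ) :
    combo φ c = fun x => ∑ j, c j * φ j x := rfl

section Key

variable {m : ℕ} {M : Type*} [TopologicalSpace M]
    [ChartedSpace (Euc m) M] [IsManifold (𝓡 m) (⊤ : ℕ∞) M]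
    [CompactSpace M] [MeasurableSpace M] [BorelSpace M]

/-- Off-support functions evaluate to zero. -/
private lemma fn_zero_of_not_mem {φ : M → ℝ} {x : M} (hx : x ∉ tsupport φ) : φ x = 0 := by
  by_contra h
  exact hx (subset_tsupport _ h)

/-- The mfderiv of a finite linear combination. -/
private lemma hasMFDerivAt_combo {k : ℕ} (φ : Fin (k+1) → M → ℝ)
    (hsm : ∀ i, SmoothFn m (φ i)) (c : Fin (k+1) → ℝ) (x : M) :
    HasMFDerivAt (𝓡 m) 𝓘(ℝ, ℝ) (fun y => ∑ j, c j * φ j y) x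
      (∑ j, c j • mfderiv (𝓡 m) 𝓘(ℝ, ℝ) (φ j) x) := by
  have hD : ∀ j, HasMFDerivAt (𝓡 m) 𝓘(ℝ, ℝ) (φ j) x (mfderiv (𝓡 m) 𝓘(ℝ, ℝ) (φ j) x) :=
    fun j => ((hsm j).mdifferentiableAt (by simp)).hasMFDerivAt
  have H : ∀ s : Finset (Fin (k+1)), HasMFDerivAt (𝓡 m) 𝓘(ℝ, ℝ)
      (fun y => ∑ j ∈ s, c j * φ j y) x
      (∑ j ∈ s, c j • mfderiv (𝓡 m) 𝓘(ℝ, ℝ) (φ j) x) := by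
    intro s
    classical
    induction s using Finset.induction_on with
    | empty => exact (hasMFDerivAt_const (I := 𝓡 m) (M := M) (0 : ℝ) x).congr_mfderiv (Finset.sum_empty (f := fun j => c j • mfderiv (𝓡 m) 𝓘(ℝ, ℝ) (φ j) x)).symm
    | @insert a s ha ih =>
      have heq : (fun y => ∑ j ∈ insert a s, c j * φ j y)
          = (fun y => c a * φ a y + ∑ j ∈ s, c j * φ j y) := by
        funext y; rw [Finset.sum_insert ha]
      rw [heq]
      have h2 := (((hD a).const_smul (c a)).add ih)
      have e : (∑ j ∈ insert a s, c j • mfderiv (𝓡 m) 𝓘(ℝ, ℝ) (φ j) x)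
          = c a • mfderiv (𝓡 m) 𝓘(ℝ, ℝ) (φ a) x + ∑ j ∈ s, c j • mfderiv (𝓡 m) 𝓘(ℝ, ℝ) (φ j) x :=
        Finset.sum_insert ha
      exact h2.congr_mfderiv e.symm
  exact H Finset.univ

end Key

private lemma gradSq_helper {m : ℕ} {M : Type*} [TopologicalSpace M] [ChartedSpace (Euc m) M]
    (gInv : M → Euc m →L[ℝ] Euc m) (x : M) (c : ℝ) (T : Euc m →L[ℝ] ℝ) :
    (c • T) (gInv x ((InnerProductSpace.toDual ℝ (Euc m)).symm (c • T)))
      = c ^ 2 * T (gInv x ((InnerProductSpace.toDual ℝ (Euc m)).symm T)) := by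
  simp only [ContinuousLinearMap.smul_apply, _root_.map_smul, ContinuousLinearMap.map_smul,
    smul_eq_mul]
  ring

section Key2

variable {m : ℕ} {M : Type*} [TopologicalSpace M]
    [ChartedSpace (Euc m) M] [IsManifold (𝓡 m) (⊤ : ℕ∞) M]
    [CompactSpace M] [MeasurableSpace M] [BorelSpace M]

private lemma lambdaK_lt_one_of_neg_family (vol μ : Measure M) [IsFiniteMeasure vol]
    [IsFiniteMeasure μ] (gInv : M → Euc m →L[ℝ] Euc m) (k : ℕ)
    (φ : Fin (k+1) → M → ℝ) (hsm : ∀ i, SmoothFn m (φ i))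
    (hneg : ∀ i, Qform vol μ gInv (φ i) < 0)
    (hdisj : ∀ i j, i ≠ j → Disjoint (tsupport (φ i)) (tsupport (φ j))) :
    lambdaK vol gInv k μ < 1 := by
  classical
  set g : Fin (k+1) → M → ℝ := fun i => gradSqG gInv (φ i) with hg
  set A : Fin (k+1) → ℝ := fun i => ∫ x, g i x ∂vol with hA
  set B : Fin (k+1) → ℝ := fun i => ∫ x, (φ i x) ^ 2 ∂μ with hB
  have hAB : ∀ i, A i < B i := fun i => sub_neg.mp (hneg i)
  have hB0 : ∀ i, 0 ≤ B i := fun i => integral_nonneg (fun x => sq_nonneg _)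
  have hgz : ∀ i x, x ∉ tsupport (φ i) → g i x = 0 :=
    fun i x hx => gradSqG_eq_zero_of_not_mem gInv (φ i) hx
  -- each φ i is nonzero somewhere
  have hφne : ∀ i, ∃ x, φ i x ≠ 0 := by
    intro i
    by_contra h
    push_neg at h
    have hφ0 : φ i = fun _ => (0:ℝ) := funext h
    have : Qform vol μ gInv (φ i) = 0 := by
      rw [Qform, hφ0]
      have : ∀ x : M, gradSqG gInv (fun _ => (0:ℝ)) x = 0 := by
        intro x; simp [gradSqG, mfderiv_const]
        rfl
      simp [this]
    linarith [hneg i]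
  -- linear independence
  have hLI : ∀ c : Fin (k+1) → ℝ, (∀ x, ∑ j, c j * φ j x = 0) → ∀ i, c i = 0 := by
    intro c hc i
    obtain ⟨x, hx⟩ := hφne i
    have hxm : x ∈ tsupport (φ i) := subset_tsupport _ hx
    have h1 := hc x
    rw [Finset.sum_eq_single i (fun j _ hj => by
      have : φ j x = 0 := fn_zero_of_not_mem
        (fun hxj => Set.disjoint_left.mp (hdisj j i hj) hxj hxm)
      rw [this, mul_zero]) (by simp)] at h1
    exact (mul_eq_zero.mp h1).resolve_right hx
  have hLinj : Function.Injective (combo φ) := by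
    rw [← LinearMap.ker_eq_bot, LinearMap.ker_eq_bot']
    intro c hc
    funext i
    refine hLI c (fun x => ?_) i
    have := congrFun hc x
    simpa [combo_apply] using this
  have hrank : Module.finrank ℝ (LinearMap.range (combo φ)) = k + 1 := by
    rw [LinearMap.finrank_range_of_inj hLinj, Module.finrank_fin_fun]
  -- smoothness of members
  have hsmF : ∀ ψ ∈ LinearMap.range (combo φ), SmoothFn m ψ := by
    rintro ψ ⟨c, rfl⟩
    rw [combo_apply]
    show ContMDiff (𝓡 m) 𝓘(ℝ, ℝ) (⊤ : ℕ∞) fun x => ∑ j, c j * φ j x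
    have : ∀ s : Finset (Fin (k+1)),
        ContMDiff (𝓡 m) 𝓘(ℝ, ℝ) (⊤ : ℕ∞) fun x => ∑ j ∈ s, c j * φ j x := by
      intro s
      induction s using Finset.induction_on with
      | empty => simpa using contMDiff_const
      | @insert a s ha ih =>
        have heq : (fun x => ∑ j ∈ insert a s, c j * φ j x)
            = (fun x => c a * φ a x + ∑ j ∈ s, c j * φ j x) := by
          funext x; rw [Finset.sum_insert ha]
        rw [heq]
        exact (contMDiff_const.mul (hsm a)).add ih
    exact this Finset.univ
  -- integrability of squares
  have hInt2 : ∀ i, Integrable (fun x => (φ i x) ^ 2) μ := by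
    intro i
    refine Continuous.integrable_of_hasCompactSupport (((hsm i).continuous).pow 2) ?_
    exact (isClosed_tsupport _).isCompact
  -- the bound t
  have hne : (Finset.univ : Finset (Fin (k+1))).Nonempty := Finset.univ_nonempty
  set t : ℝ := Finset.univ.sup' hne (fun i => max 0 (A i / B i)) with ht
  have ht0 : 0 ≤ t := by
    rw [ht]
    exact le_trans (le_max_left 0 (A 0 / B 0)) (Finset.le_sup' (fun i => max 0 (A i / B i)) (Finset.mem_univ 0))
  have ht1 : t < 1 := by
    rw [ht, Finset.sup'_lt_iff]
    intro i _
    rcases eq_or_lt_of_le (hB0 i) with hBi | hBi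
    · rw [← hBi, div_zero]; simp
    · exact max_lt one_pos ((div_lt_one hBi).mpr (hAB i))
  have htB : ∀ i, A i ≤ t * B i := by
    intro i
    rcases eq_or_lt_of_le (hB0 i) with hBi | hBi
    · rw [← hBi, mul_zero]
      have := hAB i; rw [← hBi] at this; linarith
    · have h1 : A i / B i ≤ t := by
        rw [ht]
        exact le_trans (le_max_right 0 (A i / B i)) (Finset.le_sup' (fun i => max 0 (A i / B i)) (Finset.mem_univ i))
      calc A i = (A i / B i) * B i := (div_mul_cancel₀ _ (ne_of_gt hBi)).symm
        _ ≤ t * B i := mul_le_mul_of_nonneg_right h1 (le_of_lt hBi)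
  -- pointwise square identity
  have hsq : ∀ (c : Fin (k+1) → ℝ) (x : M),
      (∑ j, c j * φ j x) ^ 2 = ∑ j, (c j) ^ 2 * (φ j x) ^ 2 := by
    intro c x
    by_cases hx : ∃ i, x ∈ tsupport (φ i)
    · obtain ⟨i, hi⟩ := hx
      have hz : ∀ j, j ≠ i → φ j x = 0 := fun j hj =>
        fn_zero_of_not_mem (fun hxj => Set.disjoint_left.mp (hdisj j i hj) hxj hi)
      rw [Finset.sum_eq_single i (fun j _ hj => by rw [hz j hj, mul_zero]) (by simp),
        Finset.sum_eq_single i (fun j _ hj => by rw [hz j hj]; ring) (by simp)]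
      ring
    · push_neg at hx
      have hz : ∀ j, φ j x = 0 := fun j => fn_zero_of_not_mem (hx j)
      simp [hz]
  -- pointwise gradient identity
  have hgrad : ∀ (c : Fin (k+1) → ℝ) (x : M),
      gradSqG gInv (fun y => ∑ j, c j * φ j y) x = ∑ j, (c j) ^ 2 * g j x := by
    intro c x
    have hDsum := (hasMFDerivAt_combo φ hsm c x).mfderiv
    by_cases hx : ∃ i, x ∈ tsupport (φ i)
    · obtain ⟨i, hi⟩ := hx
      have hz : ∀ j, j ≠ i → mfderiv (𝓡 m) 𝓘(ℝ, ℝ) (φ j) x = 0 := by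
        intro j hj
        have hxj : x ∉ tsupport (φ j) :=
          fun hxj => Set.disjoint_left.mp (hdisj j i hj) hxj hi
        rw [(notMem_tsupport_iff_eventuallyEq.mp hxj).mfderiv_eq]
        exact mfderiv_const
      have hD' : mfderiv (𝓡 m) 𝓘(ℝ, ℝ) (fun y => ∑ j, c j * φ j y) x
          = c i • mfderiv (𝓡 m) 𝓘(ℝ, ℝ) (φ i) x := by
        rw [hDsum]
        exact Finset.sum_eq_single i
          (fun j _ hj => by rw [hz j hj, smul_zero]; rfl) (fun h => absurd (Finset.mem_univ _) h)
      have hgzz : ∀ j, j ≠ i → g j x = 0 := by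
        intro j hj
        have hxj : x ∉ tsupport (φ j) :=
          fun hxj => Set.disjoint_left.mp (hdisj j i hj) hxj hi
        exact hgz j x hxj
      have hRHS : ∑ j, (c j) ^ 2 * g j x = (c i) ^ 2 * g i x :=
        Finset.sum_eq_single i (fun j _ hj => by rw [hgzz j hj, mul_zero]) (fun h => absurd (Finset.mem_univ _) h)
      rw [hRHS]
      simp only [gradSqG, hg]
      rw [hD']
      exact gradSq_helper gInv x (c i) _
    · push_neg at hx
      have hz : ∀ j, mfderiv (𝓡 m) 𝓘(ℝ, ℝ) (φ j) x = 0 := by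
        intro j
        rw [(notMem_tsupport_iff_eventuallyEq.mp (hx j)).mfderiv_eq]
        exact mfderiv_const
      have hD' : mfderiv (𝓡 m) 𝓘(ℝ, ℝ) (fun y => ∑ j, c j * φ j y) x = 0 := by
        rw [hDsum]
        simp [hz]
        exact Finset.sum_const_zero
      have hgzz : ∀ j, g j x = 0 := fun j => hgz j x (hx j)
      simp [gradSqG, hD', hgzz]
      rfl
  -- value of the squared integral
  have hBval : ∀ c : Fin (k+1) → ℝ,
      ∫ x, ((fun y => ∑ j, c j * φ j y) x) ^ 2 ∂μ = ∑ j, (c j) ^ 2 * B j := by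
    intro c
    have h1 : (fun x => ((fun y => ∑ j, c j * φ j y) x) ^ 2)
        = fun x => ∑ j, (c j) ^ 2 * (φ j x) ^ 2 := by
      funext x; exact hsq c x
    rw [show (∫ x, ((fun y => ∑ j, c j * φ j y) x) ^ 2 ∂μ)
        = ∫ x, ∑ j, (c j) ^ 2 * (φ j x) ^ 2 ∂μ from by rw [← h1],
      integral_finset_sum _ (fun j _ => (hInt2 j).const_mul _)]
    exact Finset.sum_congr rfl fun j _ => integral_const_mul _ _
  -- quotient bound on the range of `combo φ`
  have hquot : ∀ ψ ∈ LinearMap.range (combo φ),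
      (∫ x, gradSqG gInv ψ x ∂vol) / ∫ x, (ψ x) ^ 2 ∂μ ≤ t := by
    rintro ψ ⟨c, rfl⟩
    rw [combo_apply]
    have hden : ∫ x, ((fun y => ∑ j, c j * φ j y) x) ^ 2 ∂μ = ∑ j, (c j) ^ 2 * B j := hBval c
    have hden0 : 0 ≤ ∑ j, (c j) ^ 2 * B j :=
      Finset.sum_nonneg fun j _ => mul_nonneg (sq_nonneg _) (hB0 j)
    rcases eq_or_lt_of_le hden0 with hd | hd
    · rw [hden, ← hd, div_zero]; exact ht0
    · have hnum : (∫ x, gradSqG gInv (fun y => ∑ j, c j * φ j y) x ∂vol)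
          ≤ t * ∑ j, (c j) ^ 2 * B j := by
        have hfg : (fun x => gradSqG gInv (fun y => ∑ j, c j * φ j y) x)
            = fun x => ∑ j, (c j) ^ 2 * g j x := by
          funext x; exact hgrad c x
        rw [show (∫ x, gradSqG gInv (fun y => ∑ j, c j * φ j y) x ∂vol)
          = ∫ x, ∑ j, (c j) ^ 2 * g j x ∂vol from by rw [← hfg]]
        by_cases hIf : Integrable (fun x => ∑ j, (c j) ^ 2 * g j x) vol
        · set f : M → ℝ := fun x => ∑ j, (c j) ^ 2 * g j x with hf
          have hind : ∀ j, (Set.indicator (tsupport (φ j)) f) = fun x => (c j) ^ 2 * g j x := by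
            intro j; funext x
            by_cases hx : x ∈ tsupport (φ j)
            · rw [Set.indicator_of_mem hx, hf]
              exact Finset.sum_eq_single j (fun j' _ hj' => by
                rw [hgz j' x (fun hxj' => Set.disjoint_left.mp (hdisj j' j hj') hxj' hx),
                  mul_zero]) (fun h => absurd (Finset.mem_univ _) h)
            · rw [Set.indicator_of_notMem hx, hgz j x hx, mul_zero]
          have hfeq : f = fun x => ∑ j, Set.indicator (tsupport (φ j)) f x := by
            funext x
            by_cases hx : ∃ j, x ∈ tsupport (φ j)
            · obtain ⟨j0, hj0⟩ := hx
              rw [Finset.sum_eq_single j0 (fun j' _ hj' => Set.indicator_of_notMem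
                  (fun hxj' => Set.disjoint_left.mp (hdisj j' j0 hj') hxj' hj0) _)
                (fun h => absurd (Finset.mem_univ _) h), Set.indicator_of_mem hj0]
            · push_neg at hx
              have h0 : f x = 0 := by
                rw [hf]
                exact Finset.sum_eq_zero fun j _ => by rw [hgz j x (hx j), mul_zero]
              rw [h0]
              exact (Finset.sum_eq_zero fun j _ => by
                rw [Set.indicator_of_notMem (hx j)]).symm
          calc ∫ x, f x ∂vol
              = ∫ x, ∑ j, Set.indicator (tsupport (φ j)) f x ∂vol := by conv_lhs => rw [hfeq]
            _ = ∑ j, ∫ x, Set.indicator (tsupport (φ j)) f x ∂vol :=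
                integral_finset_sum _ (fun j _ =>
                  hIf.indicator (isClosed_tsupport _).measurableSet)
            _ = ∑ j, ∫ x, (c j) ^ 2 * g j x ∂vol :=
                Finset.sum_congr rfl fun j _ => by rw [hind j]
            _ = ∑ j, (c j) ^ 2 * A j :=
                Finset.sum_congr rfl fun j _ => integral_const_mul _ _
            _ ≤ ∑ j, (c j) ^ 2 * (t * B j) :=
                Finset.sum_le_sum fun j _ => mul_le_mul_of_nonneg_left (htB j) (sq_nonneg _)
            _ = t * ∑ j, (c j) ^ 2 * B j := by
                rw [Finset.mul_sum]
                exact Finset.sum_congr rfl fun j _ => by ring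
        · rw [integral_undef hIf]
          exact mul_nonneg ht0 (le_of_lt hd)
      rw [hden]
      exact (div_le_iff₀ hd).mpr hnum
  -- conclusion via the definition of lambdaK
  have hQub : sSup {s : ℝ | ∃ ψ ∈ LinearMap.range (combo φ),
      s = (∫ x, gradSqG gInv ψ x ∂vol) / ∫ x, (ψ x) ^ 2 ∂μ} ≤ t :=
    Real.sSup_le (by rintro s ⟨ψ, hψm, rfl⟩; exact hquot ψ hψm) ht0
  have hbdd : BddBelow {r : ℝ | ∃ F : Submodule ℝ (M → ℝ), Module.finrank ℝ F = k + 1 ∧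
      (∀ ψ ∈ F, SmoothFn m ψ) ∧ r = sSup {s : ℝ | ∃ ψ ∈ F,
        s = (∫ x, gradSqG gInv ψ x ∂vol) / ∫ x, (ψ x) ^ 2 ∂μ}} := by
    refine ⟨0, ?_⟩
    rintro r ⟨F, hF1, hF2, rfl⟩
    have h0m : (0:ℝ) ∈ {s : ℝ | ∃ ψ ∈ F,
        s = (∫ x, gradSqG gInv ψ x ∂vol) / ∫ x, (ψ x) ^ 2 ∂μ} :=
      ⟨0, F.zero_mem, by simp⟩
    by_cases hbd : BddAbove {s : ℝ | ∃ ψ ∈ F,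
        s = (∫ x, gradSqG gInv ψ x ∂vol) / ∫ x, (ψ x) ^ 2 ∂μ}
    · exact le_csSup hbd h0m
    · rw [Real.sSup_of_not_bddAbove hbd]
  have hle : lambdaK vol gInv k μ ≤ sSup {s : ℝ | ∃ ψ ∈ LinearMap.range (combo φ),
      s = (∫ x, gradSqG gInv ψ x ∂vol) / ∫ x, (ψ x) ^ 2 ∂μ} := by
    rw [lambdaK]
    exact csInf_le hbdd ⟨LinearMap.range (combo φ), hrank, hsmF, rfl⟩
  linarith


end Key2

/- STATEMENT 15: if `p` is unstable for `{μₑ}` with `λ_k(μₑ) ≡ 1`, then along a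
subsequence there are a neighborhood `Ω` of `p` and radii `rₑ → 0` with
`ind(μₑ, Ω \ closure B_{rₑ}(p)) = 0`. -/

theorem unstable_point_annulus_index_zero {m : ℕ} {M : Type*} [MetricSpace M]
    [ChartedSpace (Euc m) M] [IsManifold (𝓡 m) (⊤ : ℕ∞) M]
    [CompactSpace M] [MeasurableSpace M] [BorelSpace M]
    (vol : Measure M) [IsFiniteMeasure vol]
    (gInv : M → Euc m →L[ℝ] Euc m)
    (μs : ℕ → Measure M) [∀ n, IsFiniteMeasure (μs n)]
    (k : ℕ) (hlam : ∀ n, lambdaK vol gInv k (μs n) = 1)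
    (p : M) (hp : ¬ StablePt vol gInv μs p) :
    ∃ ψ : ℕ → ℕ, StrictMono ψ ∧ ∃ Ω : Set M, IsOpen Ω ∧ p ∈ Ω ∧
      ∃ r : ℕ → ℝ, (∀ j, 0 < r j) ∧ Tendsto r atTop (𝓝 0) ∧
        ∀ j, IndexZero vol (μs (ψ j)) gInv (Ω \ closure (Metric.ball p (r j))) := by
  by_contra hcon
  -- Step: for every open neighborhood of p, some annulus carries a negative
  -- direction for all large n.
  have step : ∀ (Ω : Set M), IsOpen Ω → p ∈ Ω →
      ∃ s : ℝ, 0 < s ∧ ∃ N : ℕ, ∀ n, N ≤ n →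
        ∃ φ : M → ℝ, SmoothFn m φ ∧ tsupport φ ⊆ Ω \ closure (Metric.ball p s) ∧
          Qform vol (μs n) gInv φ < 0 := by
    intro Ω hΩo hΩp
    by_contra hstep
    push_neg at hstep
    apply hcon
    have hpos : ∀ j : ℕ, (0:ℝ) < 1 / ((j:ℝ)+1) := fun j => by positivity
    choose pick hpick1 hpick2 using fun (j N : ℕ) => hstep (1/((j:ℝ)+1)) (hpos j) N
    let ψ : ℕ → ℕ := fun j => Nat.rec (pick 0 0) (fun j ih => pick (j+1) (ih+1)) j
    have hψsucc : ∀ j, ψ (j+1) = pick (j+1) (ψ j + 1) := fun j => rfl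
    have hψmono : StrictMono ψ := strictMono_nat_of_lt_succ fun j => by
      rw [hψsucc]
      exact lt_of_lt_of_le (Nat.lt_succ_self _) (hpick1 (j+1) (ψ j + 1))
    refine ⟨ψ, hψmono, Ω, hΩo, hΩp, fun j => 1/((j:ℝ)+1), hpos, ?_, ?_⟩
    · exact tendsto_one_div_add_atTop_nhds_zero_nat
    · intro j
      cases j with
      | zero => exact fun φ h1 h2 => hpick2 0 0 φ h1 h2
      | succ j =>
        rw [hψsucc j]
        exact fun φ h1 h2 => hpick2 (j+1) (ψ j + 1) φ h1 h2
  -- Iterate the step to produce J+1 disjointly supported negative directions.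
  have key : ∀ J : ℕ, ∃ s : ℝ, 0 < s ∧ ∃ N : ℕ, ∀ n, N ≤ n →
      ∃ φ : Fin (J+1) → M → ℝ, (∀ i, SmoothFn m (φ i)) ∧
        (∀ i, Qform vol (μs n) gInv (φ i) < 0) ∧
        (∀ i, Disjoint (tsupport (φ i)) (closure (Metric.ball p s))) ∧
        (∀ i i', i ≠ i' → Disjoint (tsupport (φ i)) (tsupport (φ i'))) := by
    intro J
    induction J with
    | zero =>
      obtain ⟨s, hs, N, hN⟩ := step Set.univ isOpen_univ (Set.mem_univ p)
      refine ⟨s, hs, N, fun n hn => ?_⟩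
      obtain ⟨φ0, h1, h2, h3⟩ := hN n hn
      exact ⟨fun _ => φ0, fun _ => h1, fun _ => h3, fun _ => Set.disjoint_left.mpr
        (fun x hx => (h2 hx).2), fun i i' hii => absurd (Fin.ext (by
          have h1 := i.isLt
          have h2 := i'.isLt
          omega)) hii⟩
    | succ J ih =>
      obtain ⟨s, hs, N, hN⟩ := ih
      obtain ⟨s'', hs'', N'', hN''⟩ := step (Metric.ball p s) Metric.isOpen_ball
        (Metric.mem_ball_self hs)
      refine ⟨min s'' s, lt_min hs'' hs, max N N'', fun n hn => ?_⟩
      obtain ⟨φold, ho1, ho2, ho3, ho4⟩ := hN n (le_trans (le_max_left _ _) hn)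
      obtain ⟨φnew, hn1, hn2, hn3⟩ := hN'' n (le_trans (le_max_right _ _) hn)
      have hnewball : tsupport φnew ⊆ Metric.ball p s := fun x hx => (hn2 hx).1
      have hnewdisj : Disjoint (tsupport φnew) (closure (Metric.ball p s'')) :=
        Set.disjoint_left.mpr fun x hx => (hn2 hx).2
      have hno : ∀ i, Disjoint (tsupport φnew) (tsupport (φold i)) := fun i =>
        Disjoint.mono_left (hnewball.trans subset_closure) ((ho3 i).symm)
      refine ⟨Fin.cons φnew φold, ?_, ?_, ?_, ?_⟩
      · intro i
        obtain rfl | ⟨i0, rfl⟩ := i.eq_zero_or_eq_succ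
        · simpa using hn1
        · simpa using ho1 i0
      · intro i
        obtain rfl | ⟨i0, rfl⟩ := i.eq_zero_or_eq_succ
        · simpa using hn3
        · simpa using ho2 i0
      · intro i
        obtain rfl | ⟨i0, rfl⟩ := i.eq_zero_or_eq_succ
        · simp only [Fin.cons_zero]
          exact Disjoint.mono_right
            (closure_mono (Metric.ball_subset_ball (min_le_left _ _))) hnewdisj
        · simp only [Fin.cons_succ]
          exact Disjoint.mono_right
            (closure_mono (Metric.ball_subset_ball (min_le_right _ _))) (ho3 i0)
      · intro i i' hii
        obtain rfl | ⟨i0, rfl⟩ := i.eq_zero_or_eq_succ <;>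
          obtain rfl | ⟨i1, rfl⟩ := i'.eq_zero_or_eq_succ
        · exact absurd rfl hii
        · simp only [Fin.cons_zero, Fin.cons_succ]
          exact hno i1
        · simp only [Fin.cons_zero, Fin.cons_succ]
          exact (hno i0).symm
        · simp only [Fin.cons_succ]
          exact ho4 i0 i1 (fun h => hii (congrArg Fin.succ h))
  -- Take J = k and contradict lambdaK = 1.
  obtain ⟨s, hs, N, hN⟩ := key k
  obtain ⟨φ, h1, h2, _, h4⟩ := hN N le_rfl
  have hlt := lambdaK_lt_one_of_neg_family vol (μs N) gInv k φ h1 h2 h4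
  rw [hlam N] at hlt
  exact lt_irrefl 1 hlt
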